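/- Suppose the Jacobi parameters (a_n), (b_n) are N-periodically modulated. Then for each i ∈ {0, 1, …, N−1}, as k → ∞: (a) tr X_{kN+i}(x) → tr 𝔛_0(0); (b) (a_{kN+i}/α_i) · tr X_{kN+i}′(x) → tr 𝔛_0′(0); (c) (a_{kN+i}/α_i)² · tr X_{kN+i}″(x) → tr 𝔛_0″(0); in each case locally uniformly with respect to x ∈ ℂ (here ′ denotes the derivative in x of the matrix entries, which are polynomials in x). -/

import Mathlib

open Filter Topology

attribute [local instance] Matrix.normedAddCommGroup

noncomputable section

abbrev Mat2C := Matrix (Fin 2) (Fin 2) ℂ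

/-- The transfer matrix `B_n(x)` built from the Jacobi parameters `(a_n)`, `(b_n)`. -/
def BmatC (a b : ℕ → ℝ) (n : ℕ) (x : ℂ) : Mat2C :=
  !![0, 1; -(a (n - 1) : ℂ) / (a n : ℂ), (x - (b n : ℂ)) / (a n : ℂ)]

/-- The transfer matrix `𝔅_j(x)` built from the periodic sequences `(α_n)`, `(β_n)`. -/
def frakBC (α β : ℤ → ℝ) (j : ℤ) (x : ℂ) : Mat2C :=
  !![0, 1; -(α (j - 1) : ℂ) / (α j : ℂ), (x - (β j : ℂ)) / (α j : ℂ)]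

/-- Product in decreasing index order: `prodDC C n0 len = C (n0+len-1) ⋯ C n0`. -/
def prodDC (C : ℕ → Mat2C) (n0 : ℕ) : ℕ → Mat2C
  | 0 => 1
  | (len + 1) => C (n0 + len) * prodDC C n0 len

/-- `N`-step transfer matrix `X_n(x) = B_{n+N-1}(x) ⋯ B_n(x)`. -/
def XmatC (a b : ℕ → ℝ) (N n : ℕ) (x : ℂ) : Mat2C :=
  prodDC (fun j => BmatC a b j x) n N

/-- `𝔛_n(x) = 𝔅_{n+N-1}(x) ⋯ 𝔅_n(x)`; here we only need `𝔛_0`. -/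
def frakXC (α β : ℤ → ℝ) (N : ℕ) (x : ℂ) : Mat2C :=
  prodDC (fun j : ℕ => frakBC α β (j : ℤ) x) 0 N

attribute [-instance] Matrix.normedAddCommGroup

/-! ### Auxiliary lemmas -/

lemma prodDC_congr {C C' : ℕ → Mat2C} {n0 len : ℕ}
    (h : ∀ m, m < len → C (n0 + m) = C' (n0 + m)) :
    prodDC C n0 len = prodDC C' n0 len := by
  induction len with
  | zero => rfl
  | succ l ih =>
    simp only [prodDC, h l (Nat.lt_succ_self l),
      ih fun m hm => h m (hm.trans (Nat.lt_succ_self l))]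

lemma prodDC_add (C : ℕ → Mat2C) (n0 l1 l2 : ℕ) :
    prodDC C n0 (l1 + l2) = prodDC C (n0 + l1) l2 * prodDC C n0 l1 := by
  induction l2 with
  | zero => simp [prodDC]
  | succ l ih =>
    show prodDC C n0 ((l1 + l) + 1) = _
    simp only [prodDC, ih, mul_assoc, Nat.add_assoc]

lemma prodDC_shift (C : ℕ → Mat2C) (m n0 len : ℕ) :
    prodDC (fun j => C (m + j)) n0 len = prodDC C (m + n0) len := by
  induction len with
  | zero => rfl
  | succ l ih => simp only [prodDC, ih, Nat.add_assoc]

lemma trace_prodDC_cyclic (D : ℕ → Mat2C) {N : ℕ} (hD : ∀ j, D (j + N) = D j)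
    {i : ℕ} (hiN : i ≤ N) :
    Matrix.trace (prodDC D i N) = Matrix.trace (prodDC D 0 N) := by
  have h1 : prodDC D i N = prodDC D N i * prodDC D i (N - i) := by
    have h := prodDC_add D i (N - i) i
    rwa [Nat.sub_add_cancel hiN, Nat.add_sub_cancel' hiN] at h
  have h2 : prodDC D N i = prodDC D 0 i := by
    have h3 := prodDC_shift D N 0 i
    have h4 : (fun j => D (N + j)) = fun j => D j := by
      funext j; rw [Nat.add_comm, hD]
    rw [h4] at h3
    simpa using h3.symm
  have h5 : prodDC D 0 N = prodDC D i (N - i) * prodDC D 0 i := by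
    have h := prodDC_add D 0 i (N - i)
    rwa [Nat.add_comm i (N - i), Nat.sub_add_cancel hiN, Nat.zero_add] at h
  rw [h1, h2, Matrix.trace_mul_comm, ← h5]

/-- Parametric locally uniform convergence from joint continuity. -/
lemma tlu_param {P : Type*} [PseudoMetricSpace P] {Φ : P → ℂ → ℂ}
    (hΦ : Continuous fun q : P × ℂ => Φ q.1 q.2)
    {p : ℕ → P} {p0 : P} (hp : Tendsto p atTop (𝓝 p0)) :
    TendstoLocallyUniformly (fun k x => Φ (p k) x) (Φ p0) atTop := by
  rw [tendstoLocallyUniformly_iff_forall_isCompact]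
  intro K hK
  rw [Metric.tendstoUniformlyOn_iff]
  intro ε hε
  have hS : IsCompact (insert p0 (Set.range p)) := hp.isCompact_insert_range
  have hSK : IsCompact ((insert p0 (Set.range p)) ×ˢ K) := hS.prod hK
  have huc := hSK.uniformContinuousOn_of_continuous hΦ.continuousOn
  rw [Metric.uniformContinuousOn_iff] at huc
  obtain ⟨δ, hδ, h⟩ := huc ε hε
  have hpk : ∀ᶠ k in atTop, dist (p k) p0 < δ :=
    (Metric.tendsto_nhds.mp hp) δ hδ
  filter_upwards [hpk] with k hk x hx
  have h1 : ((p0, x) : P × ℂ) ∈ (insert p0 (Set.range p)) ×ˢ K :=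
    ⟨Set.mem_insert _ _, hx⟩
  have h2 : ((p k, x) : P × ℂ) ∈ (insert p0 (Set.range p)) ×ˢ K :=
    ⟨Set.mem_insert_of_mem _ (Set.mem_range_self k), hx⟩
  have hd : dist ((p0, x) : P × ℂ) (p k, x) < δ := by
    rw [Prod.dist_eq, dist_self, max_eq_left dist_nonneg, dist_comm]
    exact hk
  exact h (p0, x) h1 (p k, x) h2 hd

/-- Composition with a shrinking rescaling. -/
lemma tlu_comp_div {H : ℕ → ℂ → ℂ} {G : ℂ → ℂ}
    (hH : TendstoLocallyUniformly H G atTop) (hG : Continuous G)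
    {s : ℕ → ℝ} (hs : Tendsto s atTop atTop) :
    TendstoLocallyUniformly (fun k x => H k (x / (s k : ℂ))) (fun _ => G 0) atTop := by
  rw [tendstoLocallyUniformly_iff_forall_isCompact]
  intro K hK
  rw [Metric.tendstoUniformlyOn_iff]
  intro ε hε
  obtain ⟨R, hR⟩ := hK.isBounded.subset_closedBall 0
  obtain ⟨δ, hδ, hGδ⟩ := Metric.continuousAt_iff.mp hG.continuousAt (ε / 2) (half_pos hε)
  have h2 := (tendstoLocallyUniformly_iff_forall_isCompact.mp hH)
    (Metric.closedBall 0 δ) (isCompact_closedBall 0 δ)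
  rw [Metric.tendstoUniformlyOn_iff] at h2
  have h3 := h2 (ε / 2) (half_pos hε)
  have h4 : ∀ᶠ k in atTop, max R 0 / δ < s k := hs.eventually_gt_atTop _
  filter_upwards [h3, h4] with k hk hsk x hx
  have hM0 : (0 : ℝ) ≤ max R 0 := le_max_right _ _
  have hsk0 : 0 < s k := lt_of_le_of_lt (div_nonneg hM0 hδ.le) hsk
  have hxR : ‖x‖ ≤ max R 0 := by
    have := hR hx
    rw [Metric.mem_closedBall, dist_zero_right] at this
    exact this.trans (le_max_left _ _)
  have hy : ‖x / (s k : ℂ)‖ < δ := by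
    rw [norm_div]
    have hns : ‖((s k : ℝ) : ℂ)‖ = s k := by
      rw [Complex.norm_real, Real.norm_eq_abs, abs_of_pos hsk0]
    rw [hns]
    rw [div_lt_iff₀ hsk0]
    calc ‖x‖ ≤ max R 0 := hxR
      _ < δ * s k := by
          rw [← div_lt_iff₀' hδ]
          exact hsk
  have hymem : x / (s k : ℂ) ∈ Metric.closedBall (0 : ℂ) δ := by
    rw [Metric.mem_closedBall, dist_zero_right]
    exact hy.le
  have hd1 : dist (G (x / (s k : ℂ))) (G 0) < ε / 2 := by
    apply hGδ
    rw [dist_zero_right]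
    exact hy
  have hd2 := hk _ hymem
  calc dist (G 0) (H k (x / (s k : ℂ)))
      ≤ dist (G 0) (G (x / (s k : ℂ))) + dist (G (x / (s k : ℂ))) (H k (x / (s k : ℂ))) :=
        dist_triangle _ _ _
    _ < ε / 2 + ε / 2 := by
        apply add_lt_add _ hd2
        rw [dist_comm]; exact hd1
    _ = ε := add_halves ε

/-! ### The parametrized transfer matrix -/

def mkM (c : ℂ × ℂ × ℂ) (y : ℂ) : Mat2C := !![0, 1; c.1, c.2.1 * y + c.2.2]

def PhiT (N : ℕ) (hN : 0 < N) (p : Fin N → ℂ × ℂ × ℂ) (y : ℂ) : ℂ :=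
  Matrix.trace (prodDC (fun m => mkM (p ⟨m % N, Nat.mod_lt m hN⟩) y) 0 N)

lemma contMkM : Continuous fun q : (ℂ × ℂ × ℂ) × ℂ => mkM q.1 q.2 := by
  apply continuous_matrix
  intro i j
  fin_cases i <;> fin_cases j <;> simp [mkM] <;> fun_prop

lemma contProd (N : ℕ) (hN : 0 < N) (n0 len : ℕ) :
    Continuous fun q : (Fin N → ℂ × ℂ × ℂ) × ℂ =>
      prodDC (fun m => mkM (q.1 ⟨m % N, Nat.mod_lt m hN⟩) q.2) n0 len := by
  induction len with
  | zero => simpa [prodDC] using continuous_const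
  | succ l ih =>
    simp only [prodDC]
    have hfac : Continuous fun q : (Fin N → ℂ × ℂ × ℂ) × ℂ =>
        mkM (q.1 ⟨(n0 + l) % N, Nat.mod_lt _ hN⟩) q.2 :=
      contMkM.comp (f := fun q : (Fin N → ℂ × ℂ × ℂ) × ℂ =>
          (q.1 ⟨(n0 + l) % N, Nat.mod_lt _ hN⟩, q.2))
        (((continuous_apply (⟨(n0 + l) % N, Nat.mod_lt _ hN⟩ : Fin N)).comp
          continuous_fst).prodMk continuous_snd)
    exact hfac.matrix_mul ih

lemma contPhiT (N : ℕ) (hN : 0 < N) :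
    Continuous fun q : (Fin N → ℂ × ℂ × ℂ) × ℂ => PhiT N hN q.1 q.2 := by
  unfold PhiT
  exact (contProd N hN 0 N).matrix_trace

lemma diffMkM (c : ℂ × ℂ × ℂ) (i j : Fin 2) :
    Differentiable ℂ fun y => mkM c y i j := by
  fin_cases i <;> fin_cases j <;> simp [mkM] <;> fun_prop

lemma diffProd (N : ℕ) (hN : 0 < N) (p : Fin N → ℂ × ℂ × ℂ) (n0 len : ℕ) :
    ∀ i j : Fin 2, Differentiable ℂ fun y =>
      prodDC (fun m => mkM (p ⟨m % N, Nat.mod_lt m hN⟩) y) n0 len i j := by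
  induction len with
  | zero => intro i j; exact differentiable_const _
  | succ l ih =>
    intro i j
    simp only [prodDC, Matrix.mul_apply]
    exact Differentiable.fun_sum fun m _ => (diffMkM _ i m).mul (ih m j)

lemma diffPhiT (N : ℕ) (hN : 0 < N) (p : Fin N → ℂ × ℂ × ℂ) :
    Differentiable ℂ (PhiT N hN p) := by
  unfold PhiT
  simp only [Matrix.trace_fin_two]
  exact (diffProd N hN p 0 N 0 0).add (diffProd N hN p 0 N 1 1)

def pSeqA (a b : ℕ → ℝ) (αi : ℝ) (N : ℕ) (n : ℕ) : Fin N → ℂ × ℂ × ℂ := fun j =>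
  ( -((a (n + ↑j - 1) : ℂ) / (a (n + ↑j) : ℂ)),
    ((a n / αi : ℝ) : ℂ) / (a (n + ↑j) : ℂ),
    -((b (n + ↑j) : ℂ) / (a (n + ↑j) : ℂ)) )

def pLim (α β : ℤ → ℝ) (N : ℕ) (i : ℕ) : Fin N → ℂ × ℂ × ℂ := fun j =>
  ( -((α ((i : ℤ) + (j : ℕ) - 1) : ℂ) / (α ((i : ℤ) + (j : ℕ)) : ℂ)),
    1 / (α ((i : ℤ) + (j : ℕ)) : ℂ),
    -((β ((i : ℤ) + (j : ℕ)) : ℂ) / (α ((i : ℤ) + (j : ℕ)) : ℂ)) )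

/-- Corollary 5 of the paper. For `N`-periodically modulated Jacobi
parameters, the traces of `X_{kN+i}` and of its (rescaled) first two derivatives converge
locally uniformly on `ℂ` to `tr 𝔛_0(0)`, `tr 𝔛_0'(0)`, `tr 𝔛_0''(0)`. -/
theorem trace_tendsto_of_periodically_modulated
    (N : ℕ) (hN : 0 < N) (a b : ℕ → ℝ) (ha : ∀ n, 0 < a n)
    (α β : ℤ → ℝ) (hα : ∀ n, 0 < α n)
    (hαper : ∀ n : ℤ, α (n + N) = α n) (hβper : ∀ n : ℤ, β (n + N) = β n)
    (hmod_a : Tendsto a atTop atTop)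
    (hmod_r : Tendsto (fun n : ℕ =>
      |a n / a (n + 1) - α (n : ℤ) / α ((n : ℤ) + 1)|) atTop (𝓝 0))
    (hmod_b : Tendsto (fun n : ℕ =>
      |b n / a n - β (n : ℤ) / α (n : ℤ)|) atTop (𝓝 0))
    (i : ℕ) (hi : i < N) :
    TendstoLocallyUniformly
      (fun (k : ℕ) (x : ℂ) => Matrix.trace (XmatC a b N (k * N + i) x))
      (fun _ : ℂ => Matrix.trace (frakXC α β N 0)) atTop ∧
    TendstoLocallyUniformly
      (fun (k : ℕ) (x : ℂ) =>
        ((a (k * N + i) / α (i : ℤ) : ℝ) : ℂ) *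
          deriv (fun y => Matrix.trace (XmatC a b N (k * N + i) y)) x)
      (fun _ : ℂ => deriv (fun y => Matrix.trace (frakXC α β N y)) 0) atTop ∧
    TendstoLocallyUniformly
      (fun (k : ℕ) (x : ℂ) =>
        ((a (k * N + i) / α (i : ℤ) : ℝ) : ℂ) ^ 2 *
          deriv (deriv (fun y => Matrix.trace (XmatC a b N (k * N + i) y))) x)
      (fun _ : ℂ => deriv (deriv (fun y => Matrix.trace (frakXC α β N y))) 0) atTop := by
  have haR : ∀ m : ℕ, a m ≠ 0 := fun m => (ha m).ne'
  have haC : ∀ m : ℕ, (a m : ℂ) ≠ 0 := fun m => Complex.ofReal_ne_zero.mpr (haR m)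
  have hαR : ∀ z : ℤ, α z ≠ 0 := fun z => (hα z).ne'
  have hαC : ∀ z : ℤ, (α z : ℂ) ≠ 0 := fun z => Complex.ofReal_ne_zero.mpr (hαR z)
  have hαper' : ∀ (z : ℤ) (k : ℕ), α (z + k * N) = α z := by
    intro z k
    induction k with
    | zero => simp
    | succ k ih =>
      have e : z + ((k : ℕ) + 1 : ℕ) * N = z + (k : ℕ) * N + N := by push_cast; ring
      rw [e, hαper, ih]
  have hβper' : ∀ (z : ℤ) (k : ℕ), β (z + k * N) = β z := by
    intro z k
    induction k with
    | zero => simp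
    | succ k ih =>
      have e : z + ((k : ℕ) + 1 : ℕ) * N = z + (k : ℕ) * N + N := by push_cast; ring
      rw [e, hβper, ih]
  have htop : ∀ c : ℕ, Tendsto (fun k : ℕ => k * N + c) atTop atTop := by
    intro c
    apply tendsto_atTop_mono (fun k => ?_) tendsto_id
    exact le_trans (Nat.le_mul_of_pos_right k hN) (Nat.le_add_right _ _)
  have key : ∀ (c : ℤ) (m : ℕ → ℕ), Tendsto m atTop atTop →
      (∀ᶠ k in atTop, (m k : ℤ) = c + k * N) →
      Tendsto (fun k => a (m k) / a (m k + 1)) atTop (𝓝 (α c / α (c + 1))) := by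
    intro c m hm hmc
    rw [tendsto_iff_dist_tendsto_zero]
    have h0 : Tendsto (fun k => |a (m k) / a (m k + 1) - α ((m k : ℕ) : ℤ) / α (((m k : ℕ) : ℤ) + 1)|)
        atTop (𝓝 0) := hmod_r.comp hm
    refine Tendsto.congr' ?_ h0
    filter_upwards [hmc] with k hk
    have e1 : α ((m k : ℤ)) = α c := by rw [hk, hαper']
    have e2 : α ((m k : ℤ) + 1) = α (c + 1) := by
      rw [hk, show c + (k : ℤ) * N + 1 = (c + 1) + (k : ℤ) * N by ring, hαper']
    rw [Real.dist_eq, e1, e2]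
  have keyb : ∀ (c : ℤ) (m : ℕ → ℕ), Tendsto m atTop atTop →
      (∀ᶠ k in atTop, (m k : ℤ) = c + k * N) →
      Tendsto (fun k => b (m k) / a (m k)) atTop (𝓝 (β c / α c)) := by
    intro c m hm hmc
    rw [tendsto_iff_dist_tendsto_zero]
    have h0 : Tendsto (fun k => |b (m k) / a (m k) - β ((m k : ℕ) : ℤ) / α ((m k : ℕ) : ℤ)|)
        atTop (𝓝 0) := hmod_b.comp hm
    refine Tendsto.congr' ?_ h0
    filter_upwards [hmc] with k hk
    have e1 : α ((m k : ℤ)) = α c := by rw [hk, hαper']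
    have e2 : β ((m k : ℤ)) = β c := by rw [hk, hβper']
    rw [Real.dist_eq, e1, e2]
  have hratio : ∀ jj : ℕ, Tendsto (fun k => a (k * N + i) / a (k * N + i + jj)) atTop
      (𝓝 (α (i : ℤ) / α ((i : ℤ) + (jj : ℕ)))) := by
    intro jj
    induction jj with
    | zero =>
      have e : (fun k : ℕ => a (k * N + i) / a (k * N + i + 0))
          = fun _ : ℕ => α (i : ℤ) / α ((i : ℤ) + ((0 : ℕ) : ℤ)) := by
        funext k
        simp [div_self (haR (k * N + i)), div_self (hαR (i : ℤ))]
      rw [e]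
      exact tendsto_const_nhds
    | succ jj ih =>
      have hm : Tendsto (fun k : ℕ => k * N + i + jj) atTop atTop := by
        refine Tendsto.congr (fun k => ?_) (htop (i + jj))
        rw [Nat.add_assoc]
      have hmc : ∀ᶠ k : ℕ in atTop, ((k * N + i + jj : ℕ) : ℤ) = ((i : ℤ) + jj) + k * N := by
        filter_upwards with k
        push_cast; ring
      have hstep := key ((i : ℤ) + jj) (fun k => k * N + i + jj) hm hmc
      have hmul := ih.mul hstep
      have elim : α (i : ℤ) / α ((i : ℤ) + (jj : ℕ)) * (α ((i : ℤ) + jj) / α ((i : ℤ) + jj + 1))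
          = α (i : ℤ) / α ((i : ℤ) + ((jj + 1 : ℕ) : ℤ)) := by
        have e : ((i : ℤ) + ((jj + 1 : ℕ) : ℤ)) = (i : ℤ) + jj + 1 := by push_cast; ring
        have h1 := hαR ((i : ℤ) + jj)
        have h2 := hαR ((i : ℤ) + jj + 1)
        rw [e]
        field_simp
      rw [elim] at hmul
      refine Tendsto.congr (fun k => ?_) hmul
      have h1 := haR (k * N + i + jj)
      have h2 := haR (k * N + i + jj + 1)
      show a (k * N + i) / a (k * N + i + jj) * (a (k * N + i + jj) / a (k * N + i + jj + 1))
          = a (k * N + i) / a (k * N + i + (jj + 1))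
      rw [show k * N + i + (jj + 1) = k * N + i + jj + 1 from rfl]
      field_simp
  have hp : Tendsto (fun k => pSeqA a b (α (i : ℤ)) N (k * N + i)) atTop (𝓝 (pLim α β N i)) := by
    rw [tendsto_pi_nhds]
    intro j
    simp only [pSeqA, pLim]
    refine Tendsto.prodMk_nhds ?_ (Tendsto.prodMk_nhds ?_ ?_)
    · -- first component
      have hm : Tendsto (fun k : ℕ => k * N + i + (j : ℕ) - 1) atTop atTop := by
        refine Tendsto.congr (fun k => ?_) ((tendsto_sub_atTop_nat 1).comp (htop (i + (j : ℕ))))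
        simp only [Function.comp_apply]
        rw [Nat.add_assoc]
      have hle : ∀ k : ℕ, 1 ≤ k → 1 ≤ k * N + i + (j : ℕ) := by
        intro k hk
        have hkN : 1 ≤ k * N := Nat.mul_pos hk hN
        exact hkN.trans ((Nat.le_add_right (k * N) i).trans (Nat.le_add_right (k * N + i) (j : ℕ)))
      have hmc : ∀ᶠ k : ℕ in atTop,
          ((k * N + i + (j : ℕ) - 1 : ℕ) : ℤ) = ((i : ℤ) + (j : ℕ) - 1) + k * N := by
        filter_upwards [eventually_ge_atTop 1] with k hk
        rw [Nat.cast_sub (hle k hk)]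
        push_cast; ring
      have hr := key ((i : ℤ) + (j : ℕ) - 1) _ hm hmc
      rw [show (i : ℤ) + (j : ℕ) - 1 + 1 = (i : ℤ) + (j : ℕ) by ring] at hr
      have hr2 : Tendsto (fun k => a (k * N + i + (j : ℕ) - 1) / a (k * N + i + (j : ℕ)))
          atTop (𝓝 (α ((i : ℤ) + (j : ℕ) - 1) / α ((i : ℤ) + (j : ℕ)))) := by
        refine Tendsto.congr' ?_ hr
        filter_upwards [eventually_ge_atTop 1] with k hk
        rw [Nat.sub_add_cancel (hle k hk)]
      have hC := ((Complex.continuous_ofReal.tendsto _).comp hr2).neg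
      simpa [Function.comp_def, Complex.ofReal_div] using hC
    · -- second component
      have hr2 := (hratio (j : ℕ)).div_const (α (i : ℤ))
      have elim2 : α (i : ℤ) / α ((i : ℤ) + (j : ℕ)) / α (i : ℤ) = 1 / α ((i : ℤ) + (j : ℕ)) := by
        rw [div_right_comm, div_self (hαR (i : ℤ))]
      rw [elim2] at hr2
      have hr3 := Tendsto.congr
        (fun k => div_right_comm (a (k * N + i)) (a (k * N + i + (j : ℕ))) (α (i : ℤ))) hr2
      have hC := (Complex.continuous_ofReal.tendsto _).comp hr3
      simpa [Function.comp_def, Complex.ofReal_div] using hC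
    · -- third component
      have hm : Tendsto (fun k : ℕ => k * N + i + (j : ℕ)) atTop atTop := by
        refine Tendsto.congr (fun k => ?_) (htop (i + (j : ℕ)))
        rw [Nat.add_assoc]
      have hmc : ∀ᶠ k : ℕ in atTop,
          ((k * N + i + (j : ℕ) : ℕ) : ℤ) = ((i : ℤ) + (j : ℕ)) + k * N := by
        filter_upwards with k
        push_cast; ring
      have hr := keyb ((i : ℤ) + (j : ℕ)) _ hm hmc
      have hC := ((Complex.continuous_ofReal.tendsto _).comp hr).neg
      simpa [Function.comp_def, Complex.ofReal_div] using hC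
  have htlu0 : TendstoLocallyUniformly
      (fun k x => PhiT N hN (pSeqA a b (α (i : ℤ)) N (k * N + i)) x)
      (PhiT N hN (pLim α β N i)) atTop := tlu_param (contPhiT N hN) hp
  have hsC : ∀ k : ℕ, ((a (k * N + i) / α (i : ℤ) : ℝ) : ℂ) ≠ 0 := fun k =>
    Complex.ofReal_ne_zero.mpr (div_pos (ha _) (hα _)).ne'
  have hstend : Tendsto (fun k : ℕ => a (k * N + i) / α (i : ℤ)) atTop atTop :=
    Tendsto.atTop_div_const (hα _) (hmod_a.comp (htop i))
  have Id1 : ∀ (k : ℕ) (y : ℂ), PhiT N hN (pSeqA a b (α (i : ℤ)) N (k * N + i)) y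
      = Matrix.trace (XmatC a b N (k * N + i) (((a (k * N + i) / α (i : ℤ) : ℝ) : ℂ) * y)) := by
    intro k y
    unfold PhiT XmatC
    have hsh := prodDC_shift
      (fun t => BmatC a b t (((a (k * N + i) / α (i : ℤ) : ℝ) : ℂ) * y)) (k * N + i) 0 N
    rw [Nat.add_zero] at hsh
    rw [← hsh]
    refine congrArg Matrix.trace (prodDC_congr ?_)
    intro m hm
    simp only [Nat.zero_add]
    have hmod : m % N = m := Nat.mod_eq_of_lt hm
    ext r c
    fin_cases r <;> fin_cases c
    · simp [mkM, BmatC]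
    · simp [mkM, BmatC]
    · simp [mkM, BmatC, pSeqA, hmod, neg_div]
    · have hA := haC (k * N + i + m)
      simp [mkM, BmatC, pSeqA, hmod]
      rw [div_mul_eq_mul_div, ← sub_eq_add_neg, div_sub_div_same]
  have Id2 : ∀ y : ℂ, PhiT N hN (pLim α β N i) y = Matrix.trace (frakXC α β N y) := by
    intro y
    unfold PhiT frakXC
    have h1 : prodDC (fun m => mkM (pLim α β N i ⟨m % N, Nat.mod_lt m hN⟩) y) 0 N
        = prodDC (fun m => frakBC α β ((i : ℤ) + m) y) 0 N := by
      apply prodDC_congr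
      intro m hm
      simp only [Nat.zero_add]
      have hmod : m % N = m := Nat.mod_eq_of_lt hm
      ext r c
      fin_cases r <;> fin_cases c
      · simp [mkM, frakBC]
      · simp [mkM, frakBC]
      · simp [mkM, frakBC, pLim, hmod, neg_div]
      · have hA := hαC ((i : ℤ) + m)
        simp [mkM, frakBC, pLim, hmod]
        rw [inv_mul_eq_div, ← sub_eq_add_neg, div_sub_div_same]
    rw [h1]
    have h2 : (fun m : ℕ => frakBC α β ((i : ℤ) + m) y)
        = fun m : ℕ => frakBC α β ((i + m : ℕ) : ℤ) y := by
      funext m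
      congr 1 <;> omega
    rw [h2]
    have h3 := prodDC_shift (fun t : ℕ => frakBC α β (t : ℤ) y) i 0 N
    rw [Nat.add_zero] at h3
    rw [show (fun m : ℕ => frakBC α β ((i + m : ℕ) : ℤ) y)
        = fun m : ℕ => (fun t : ℕ => frakBC α β (t : ℤ) y) (i + m) from rfl, h3]
    have hD : ∀ t : ℕ, (fun t : ℕ => frakBC α β (t : ℤ) y) (t + N)
        = (fun t : ℕ => frakBC α β (t : ℤ) y) t := by
      intro t
      show frakBC α β ((t + N : ℕ) : ℤ) y = frakBC α β (t : ℤ) y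
      have e : ((t + N : ℕ) : ℤ) = (t : ℤ) + N := by push_cast; ring
      rw [e]
      unfold frakBC
      rw [show (t : ℤ) + N - 1 = ((t : ℤ) - 1) + N by ring, hαper, hαper, hβper]
    exact trace_prodDC_cyclic (fun t : ℕ => frakBC α β (t : ℤ) y) hD hi.le
  have hFk : ∀ k : ℕ, (fun y => Matrix.trace (XmatC a b N (k * N + i) y))
      = fun y => PhiT N hN (pSeqA a b (α (i : ℤ)) N (k * N + i))
          (y / ((a (k * N + i) / α (i : ℤ) : ℝ) : ℂ)) := by
    intro k
    funext y
    rw [Id1 k (y / ((a (k * N + i) / α (i : ℤ) : ℝ) : ℂ)), mul_div_cancel₀ y (hsC k)]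
  have hderivdiff : ∀ g : ℂ → ℂ, Differentiable ℂ g → Differentiable ℂ (deriv g) := by
    intro g hg
    have h := hg.contDiff (n := (1 : WithTop ℕ∞) + 1)
    exact ((contDiff_succ_iff_deriv.mp h).2.2).differentiable one_ne_zero
  have hdg : ∀ (g : ℂ → ℂ), Differentiable ℂ g → ∀ (c : ℂ), c ≠ 0 → ∀ x : ℂ,
      deriv (fun y => g (y / c)) x = deriv g (x / c) * c⁻¹ := by
    intro g hg c hc x
    rw [show (fun y => g (y / c)) = g ∘ fun y => y / c from rfl,
      deriv_comp x hg.differentiableAt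
        (show DifferentiableAt ℂ (fun y => y / c) x from
          (differentiable_id.div_const c).differentiableAt)]
    congr 1
    rw [deriv_div_const]
    simp [one_div]
  have htlu1 : TendstoLocallyUniformly
      (fun k => deriv (PhiT N hN (pSeqA a b (α (i : ℤ)) N (k * N + i))))
      (deriv (PhiT N hN (pLim α β N i))) atTop := by
    have h := (tendstoLocallyUniformlyOn_univ.mpr htlu0).deriv
      (Eventually.of_forall fun k => (diffPhiT N hN _).differentiableOn) isOpen_univ
    rw [tendstoLocallyUniformlyOn_univ] at h
    exact h
  have htlu2 : TendstoLocallyUniformly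
      (fun k => deriv (deriv (PhiT N hN (pSeqA a b (α (i : ℤ)) N (k * N + i)))))
      (deriv (deriv (PhiT N hN (pLim α β N i)))) atTop := by
    have h := (tendstoLocallyUniformlyOn_univ.mpr htlu1).deriv
      (Eventually.of_forall fun k => (hderivdiff _ (diffPhiT N hN _)).differentiableOn) isOpen_univ
    rw [tendstoLocallyUniformlyOn_univ] at h
    exact h
  refine ⟨?_, ?_, ?_⟩
  · rw [show (fun (k : ℕ) (x : ℂ) => Matrix.trace (XmatC a b N (k * N + i) x))
        = fun (k : ℕ) (x : ℂ) => PhiT N hN (pSeqA a b (α (i : ℤ)) N (k * N + i))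
            (x / ((a (k * N + i) / α (i : ℤ) : ℝ) : ℂ))
        from funext fun k => hFk k]
    rw [show (fun _ : ℂ => Matrix.trace (frakXC α β N 0))
        = fun _ : ℂ => PhiT N hN (pLim α β N i) 0 from funext fun _ => (Id2 0).symm]
    exact tlu_comp_div htlu0 (diffPhiT N hN _).continuous hstend
  · rw [show (fun (k : ℕ) (x : ℂ) => ((a (k * N + i) / α (i : ℤ) : ℝ) : ℂ) *
          deriv (fun y => Matrix.trace (XmatC a b N (k * N + i) y)) x)
        = fun (k : ℕ) (x : ℂ) => deriv (PhiT N hN (pSeqA a b (α (i : ℤ)) N (k * N + i)))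
            (x / ((a (k * N + i) / α (i : ℤ) : ℝ) : ℂ)) from ?_]
    · rw [show (fun _ : ℂ => deriv (fun y => Matrix.trace (frakXC α β N y)) 0)
          = fun _ : ℂ => deriv (PhiT N hN (pLim α β N i)) 0 from ?_]
      · exact tlu_comp_div htlu1 (hderivdiff _ (diffPhiT N hN _)).continuous hstend
      · funext z
        rw [show (fun y => Matrix.trace (frakXC α β N y)) = PhiT N hN (pLim α β N i)
            from funext fun y => (Id2 y).symm]
    · funext k x
      rw [hFk k, hdg _ (diffPhiT N hN _) _ (hsC k) x]
      have h1 := haC (k * N + i)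
      have h2 := hαC (i : ℤ)
      field_simp
      try ring
      have h3 : ((a (k * N + i) * (α (i : ℤ))⁻¹ : ℝ) : ℂ) ≠ 0 := by
        rw [← div_eq_mul_inv]; exact hsC k
      rw [mul_inv_cancel₀ h3, one_mul]
  · rw [show (fun (k : ℕ) (x : ℂ) => ((a (k * N + i) / α (i : ℤ) : ℝ) : ℂ) ^ 2 *
          deriv (deriv (fun y => Matrix.trace (XmatC a b N (k * N + i) y))) x)
        = fun (k : ℕ) (x : ℂ) => deriv (deriv (PhiT N hN (pSeqA a b (α (i : ℤ)) N (k * N + i))))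
            (x / ((a (k * N + i) / α (i : ℤ) : ℝ) : ℂ)) from ?_]
    · rw [show (fun _ : ℂ => deriv (deriv (fun y => Matrix.trace (frakXC α β N y))) 0)
          = fun _ : ℂ => deriv (deriv (PhiT N hN (pLim α β N i))) 0 from ?_]
      · exact tlu_comp_div htlu2
          (hderivdiff _ (hderivdiff _ (diffPhiT N hN _))).continuous hstend
      · funext z
        rw [show (fun y => Matrix.trace (frakXC α β N y)) = PhiT N hN (pLim α β N i)
            from funext fun y => (Id2 y).symm]
    · funext k x
      have e1 : deriv (fun y => Matrix.trace (XmatC a b N (k * N + i) y))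
          = fun z => deriv (PhiT N hN (pSeqA a b (α (i : ℤ)) N (k * N + i)))
              (z / ((a (k * N + i) / α (i : ℤ) : ℝ) : ℂ)) *
              (((a (k * N + i) / α (i : ℤ) : ℝ) : ℂ))⁻¹ := by
        funext z
        rw [hFk k, hdg _ (diffPhiT N hN _) _ (hsC k) z]
      rw [e1, deriv_mul_const_field,
        hdg _ (hderivdiff _ (diffPhiT N hN _)) _ (hsC k) x]
      have h1 := haC (k * N + i)
      have h2 := hαC (i : ℤ)
      field_simp
      try ring
      have h3 : ((a (k * N + i) * (α (i : ℤ))⁻¹ : ℝ) : ℂ) ≠ 0 := by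
        rw [← div_eq_mul_inv]; exact hsC k
      rw [mul_inv_cancel₀ h3, one_mul]

end
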